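/- arXiv:2510.20064 — 2 statements merged into one kernel-verified Lean document; each statement's English description precedes it below -/
import Mathlib

section
/- Single-step speculative sampling is lossless: if X ~ q is accepted with probability min(1, p(X)/q(X)), and upon rejection a fresh token is drawn from the residual distribution p_res(x) proportional to max(0, p(x) - q(x)), then the output token is distributed exactly according to p. Formally, for every x in V: min(p(x), q(x)) + (1 - beta) * p_res(x) = p(x), where beta = sum_y min(p(y), q(y)). -/
theorem speculative_sampling_lossless {V : Type*} [Fintype V]
    (p q : V → ℝ)
    (hp0 : ∀ x, 0 ≤ p x) (hq0 : ∀ x, 0 < q x)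
    (hp : ∑ x, p x = 1) (hq : ∑ x, q x = 1)
    (hne : p ≠ q) :
    ∀ x, min (p x) (q x) +
        (1 - ∑ y, min (p y) (q y)) *
          (max 0 (p x - q x) / (1 - ∑ y, min (p y) (q y))) = p x := by
  have hβ : (∑ y, min (p y) (q y)) ≠ 1 := by
    intro h
    apply hne
    have h1 : ∀ y, min (p y) (q y) = p y := by
      have hle : ∀ y ∈ Finset.univ, min (p y) (q y) ≤ p y :=
        fun y _ => min_le_left _ _
      have := (Finset.sum_eq_sum_iff_of_le hle).mp (by rw [h, hp])
      exact fun y => this y (Finset.mem_univ y)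
    have h2 : ∀ y, min (p y) (q y) = q y := by
      have hle : ∀ y ∈ Finset.univ, min (p y) (q y) ≤ q y :=
        fun y _ => min_le_right _ _
      have := (Finset.sum_eq_sum_iff_of_le hle).mp (by rw [h, hq])
      exact fun y => this y (Finset.mem_univ y)
    funext y
    rw [← h1 y, h2 y]
  have hne0 : (1 - ∑ y, min (p y) (q y)) ≠ 0 := sub_ne_zero.mpr (Ne.symm hβ)
  intro x
  rw [mul_div_cancel₀ _ hne0]
  rcases le_total (p x) (q x) with h | h
  · rw [min_eq_left h, max_eq_left (by linarith), add_zero]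
  · rw [min_eq_right h, max_eq_right (by linarith)]; ring
end

section
/- Hedge regret bound: for the exponential weights algorithm with learning rate eta = sqrt(8 ln N / T) run on N experts over T rounds with loss vectors f_t in [0,1]^N, the expected cumulative loss satisfies sum_{t=1}^T <p_t, f_t> - min_{i} sum_{t=1}^T f_t[i] <= sqrt((T/2) * ln N), where p_t are the Hedge weight distributions. -/
open Real

lemma hedge_hoeffding_core (m s : ℝ) (hm0 : 0 ≤ m) (hm1 : m ≤ 1) (hs : 0 ≤ s) :
    Real.log (1 - m + m * Real.exp (-s)) ≤ -(s * m) + s ^ 2 / 8 := by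
  set D : ℝ → ℝ := fun x => 1 - m + m * Real.exp (-x) with hDdef
  have hD : ∀ x, 0 < D x := by
    intro x
    rcases eq_or_lt_of_le hm1 with h | h
    · show 0 < 1 - m + m * Real.exp (-x)
      have := mul_pos (show (0:ℝ) < m by linarith) (Real.exp_pos (-x)); linarith
    · have : 0 ≤ m * Real.exp (-x) := mul_nonneg hm0 (Real.exp_pos _).le
      simp only [hDdef]; linarith
  set G : ℝ → ℝ := fun x => -m + x / 4 + m * Real.exp (-x) / D x with hGdef
  have hDderiv : ∀ x, HasDerivAt D (-(m * Real.exp (-x))) x := by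
    intro x
    have h1 : HasDerivAt (fun y : ℝ => Real.exp (-y)) (-Real.exp (-x)) x := by
      exact ((Real.hasDerivAt_exp (-x)).comp x (hasDerivAt_neg x)).congr_deriv (by simp)
    have := (h1.const_mul m)
    have h2 := (hasDerivAt_const x (1 - m)).add (h1.const_mul m)
    exact h2.congr_deriv (by ring)
  have hF : ∀ x, HasDerivAt (fun y => -(y * m) + y ^ 2 / 8 - Real.log (D y)) (G x) x := by
    intro x
    have h1 : HasDerivAt (fun y : ℝ => -(y * m)) (-m) x := by
      exact ((hasDerivAt_id x).mul_const m).neg.congr_deriv (by simp)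
    have h2 : HasDerivAt (fun y : ℝ => y ^ 2 / 8) (x / 4) x := by
      have := (hasDerivAt_pow 2 x).div_const 8
      exact this.congr_deriv (by norm_num; ring)
    have h3 : HasDerivAt (fun y => Real.log (D y)) (-(m * Real.exp (-x)) / D x) x :=
      (hDderiv x).log (hD x).ne'
    have := (h1.add h2).sub h3
    refine this.congr_deriv ?_
    simp only [hGdef]; field_simp; ring
  have hG : ∀ x, HasDerivAt G (1 / 4 - m * (1 - m) * Real.exp (-x) / (D x) ^ 2) x := by
    intro x
    have h1 : HasDerivAt (fun y : ℝ => -m + y / 4) (1 / 4) x := by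
      exact ((hasDerivAt_const x (-m)).add ((hasDerivAt_id x).div_const 4)).congr_deriv (by norm_num)
    have hnum : HasDerivAt (fun y => m * Real.exp (-y)) (-(m * Real.exp (-x))) x := by
      have he : HasDerivAt (fun y : ℝ => Real.exp (-y)) (-Real.exp (-x)) x := by
        exact ((Real.hasDerivAt_exp (-x)).comp x (hasDerivAt_neg x)).congr_deriv (by simp)
      simpa [mul_neg] using he.const_mul m
    have h2 := hnum.div (hDderiv x) (hD x).ne'
    have := h1.add h2
    refine this.congr_deriv ?_
    have hDx : D x = 1 - m + m * Real.exp (-x) := rfl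
    field_simp
    rw [hDx]; ring
  have hGnonneg : ∀ x, 0 ≤ x → 0 ≤ G x := by
    intro x hx
    have hmono : Monotone G := by
      apply monotone_of_deriv_nonneg (fun y => (hG y).differentiableAt)
      intro y
      rw [(hG y).deriv]
      have hDy := hD y
      rw [sub_nonneg, div_le_iff₀ (by positivity)]
      have hDyx : D y = 1 - m + m * Real.exp (-y) := rfl
      nlinarith [sq_nonneg (1 - m - m * Real.exp (-y)), Real.exp_pos (-y)]
    have hG0 : G 0 = 0 := by
      simp only [hGdef, hDdef]
      norm_num
    calc (0:ℝ) = G 0 := hG0.symm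
      _ ≤ G x := hmono hx
  -- F is monotone on [0, ∞)
  have hFmono : MonotoneOn (fun y => -(y * m) + y ^ 2 / 8 - Real.log (D y)) (Set.Ici 0) := by
    apply monotoneOn_of_deriv_nonneg (convex_Ici 0)
      (Continuous.continuousOn (by fun_prop (disch := exact fun y => (hD y).ne')))
    · intro y hy
      exact (hF y).differentiableAt.differentiableWithinAt
    · intro y hy
      rw [(hF y).deriv]
      exact hGnonneg y (le_of_lt (by simpa using hy))
  have h0 : (fun y => -(y * m) + y ^ 2 / 8 - Real.log (D y)) 0 = 0 := by
    simp [hDdef]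
  have := hFmono (Set.self_mem_Ici) (Set.mem_Ici.mpr hs) hs
  rw [h0] at this
  simp only [hDdef] at this
  linarith

lemma hedge_exp_convex (x η : ℝ) (hx0 : 0 ≤ x) (hx1 : x ≤ 1) :
    Real.exp (-(η * x)) ≤ 1 - x + x * Real.exp (-η) := by
  have h := convexOn_exp.2 (Set.mem_univ (0:ℝ)) (Set.mem_univ (-η))
    (by linarith : (0:ℝ) ≤ 1 - x) hx0 (by ring)
  simp only [smul_eq_mul, mul_zero, zero_add, mul_neg, Real.exp_zero, mul_one] at h
  have hx : (1 - x) * 0 + x * (-η) = -(η * x) := by ring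
  calc Real.exp (-(η * x)) = Real.exp ((1-x) * 0 + x * (-η)) := by rw [hx]
    _ ≤ (1-x) * Real.exp 0 + x * Real.exp (-η) := by
        simpa [smul_eq_mul] using convexOn_exp.2 (Set.mem_univ (0:ℝ)) (Set.mem_univ (-η))
          (by linarith : (0:ℝ) ≤ 1 - x) hx0 (by ring)
    _ = 1 - x + x * Real.exp (-η) := by rw [Real.exp_zero]; ring


lemma hedge_D_pos (m s : ℝ) (hm0 : 0 ≤ m) (hm1 : m ≤ 1) :
    0 < 1 - m + m * Real.exp (-s) := by
  rcases eq_or_lt_of_le hm1 with h | h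
  · have := mul_pos (show (0:ℝ) < m by linarith) (Real.exp_pos (-s))
    linarith
  · have := mul_nonneg hm0 (Real.exp_pos (-s)).le
    linarith

/-- Hedge (exponential weights) regret bound with learning rate
`η = √(8 ln N / T)`. -/
theorem hedge_regret (N T : ℕ) (hN : 0 < N)
    (f : ℕ → Fin N → ℝ) (hf : ∀ t i, f t i ∈ Set.Icc (0:ℝ) 1)
    (η : ℝ) (hη : η = Real.sqrt (8 * Real.log N / T))
    (w p : ℕ → Fin N → ℝ)
    (hw : ∀ t i, w t i = Real.exp (-η * ∑ s ∈ Finset.range t, f s i))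
    (hp : ∀ t i, p t i = w t i / ∑ j, w t j) :
    ∑ t ∈ Finset.range T, ∑ i, p t i * f t i -
        Finset.univ.inf' (Finset.univ_nonempty_iff.mpr (Fin.pos_iff_nonempty.mp hN))
          (fun i => ∑ t ∈ Finset.range T, f t i) ≤
      Real.sqrt ((T / 2) * Real.log N) := by
  haveI : Nonempty (Fin N) := Fin.pos_iff_nonempty.mp hN
  -- Case N = 1
  rcases Nat.lt_or_ge N 2 with hN1 | hN2
  · obtain rfl : N = 1 := by omega
    have hη0 : η = 0 := by rw [hη]; norm_num
    have hp1 : ∀ t (i : Fin 1), p t i = 1 := by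
      intro t i
      rw [hp]
      simp [hw, hη0, Fin.sum_univ_one]
    have h1 : ∀ t, ∑ i, p t i * f t i = f t 0 := by
      intro t; rw [Fin.sum_univ_one, hp1, one_mul]
    have h2 : (Finset.univ.inf' (Finset.univ_nonempty_iff.mpr (Fin.pos_iff_nonempty.mp hN))
          (fun i : Fin 1 => ∑ t ∈ Finset.range T, f t i)) = ∑ t ∈ Finset.range T, f t 0 := by
      refine le_antisymm (Finset.inf'_le _ (Finset.mem_univ 0)) (Finset.le_inf' _ _ ?_)
      intro i _
      rw [Subsingleton.elim i (0 : Fin 1)]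
    rw [h2, Finset.sum_congr rfl (fun t _ => h1 t), sub_self]
    positivity
  -- Case T = 0
  rcases Nat.eq_zero_or_pos T with rfl | hT
  · simp only [Finset.range_zero, Finset.sum_empty, Finset.inf'_const, sub_self]
    positivity
  -- Main case
  have hηnn : 0 ≤ η := hη ▸ Real.sqrt_nonneg _
  set W : ℕ → ℝ := fun t => ∑ j, w t j with hWdef
  have hWpos : ∀ t, 0 < W t := fun t =>
    Finset.sum_pos (fun j _ => by rw [hw]; positivity) Finset.univ_nonempty
  have hpnn : ∀ t i, 0 ≤ p t i := fun t i => by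
    rw [hp]; exact div_nonneg (by rw [hw]; positivity) (hWpos t).le
  have hpsum : ∀ t, ∑ i, p t i = 1 := by
    intro t
    have : ∑ i, p t i = (∑ i, w t i) / W t := by
      rw [Finset.sum_div]; exact Finset.sum_congr rfl (fun i _ => hp t i)
    rw [this, div_self (hWpos t).ne']
  set M : ℕ → ℝ := fun t => ∑ i, p t i * f t i with hMdef
  have hM0 : ∀ t, 0 ≤ M t := fun t =>
    Finset.sum_nonneg (fun i _ => mul_nonneg (hpnn t i) (hf t i).1)
  have hM1 : ∀ t, M t ≤ 1 := by
    intro t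
    calc M t ≤ ∑ i, p t i :=
          Finset.sum_le_sum (fun i _ => mul_le_of_le_one_right (hpnn t i) (hf t i).2)
      _ = 1 := hpsum t
  -- one-step bound
  have step : ∀ t, Real.log (W (t+1)) ≤ Real.log (W t) + (-(η * M t) + η ^ 2 / 8) := by
    intro t
    have e1 : W (t+1) = ∑ i, w t i * Real.exp (-(η * f t i)) := by
      refine Finset.sum_congr rfl (fun i _ => ?_)
      rw [hw, hw, Finset.sum_range_succ, ← Real.exp_add]
      congr 1; ring
    have e2 : W (t+1) ≤ ∑ i, w t i * (1 - f t i + f t i * Real.exp (-η)) := by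
      rw [e1]
      refine Finset.sum_le_sum (fun i _ => ?_)
      exact mul_le_mul_of_nonneg_left (hedge_exp_convex _ _ (hf t i).1 (hf t i).2)
        (by rw [hw]; positivity)
    have e3 : ∑ i, w t i * (1 - f t i + f t i * Real.exp (-η))
        = W t * (1 - M t + M t * Real.exp (-η)) := by
      have hwp : ∀ i, w t i = p t i * W t := by
        intro i; rw [hp]
        have hWW : (∑ j, w t j) = W t := rfl
        rw [hWW, div_mul_cancel₀ _ (hWpos t).ne']
      calc ∑ i, w t i * (1 - f t i + f t i * Real.exp (-η))
          = ∑ i, W t * (p t i * (1 - f t i + f t i * Real.exp (-η))) := by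
            refine Finset.sum_congr rfl (fun i _ => ?_); rw [hwp i]; ring
        _ = W t * ∑ i, p t i * (1 - f t i + f t i * Real.exp (-η)) := by
            rw [Finset.mul_sum]
        _ = W t * (1 - M t + M t * Real.exp (-η)) := by
            congr 1
            have : ∀ i : Fin N, p t i * (1 - f t i + f t i * Real.exp (-η))
                = p t i - p t i * f t i + (p t i * f t i) * Real.exp (-η) := fun i => by ring
            rw [Finset.sum_congr rfl (fun i _ => this i), Finset.sum_add_distrib,
              Finset.sum_sub_distrib, ← Finset.sum_mul, hpsum]
    have hDpos := hedge_D_pos (M t) η (hM0 t) (hM1 t)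
    have hle : W (t+1) ≤ W t * (1 - M t + M t * Real.exp (-η)) := by rw [← e3]; exact e2
    calc Real.log (W (t+1)) ≤ Real.log (W t * (1 - M t + M t * Real.exp (-η))) :=
          Real.log_le_log (hWpos _) hle
      _ = Real.log (W t) + Real.log (1 - M t + M t * Real.exp (-η)) :=
          Real.log_mul (hWpos t).ne' hDpos.ne'
      _ ≤ Real.log (W t) + (-(η * M t) + η ^ 2 / 8) := by
          linarith [hedge_hoeffding_core (M t) η (hM0 t) (hM1 t) hηnn]
  -- telescoping
  have htel : Real.log (W T) - Real.log (W 0)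
      ≤ ∑ t ∈ Finset.range T, (-(η * M t) + η ^ 2 / 8) := by
    rw [← Finset.sum_range_sub (fun t => Real.log (W t)) T]
    exact Finset.sum_le_sum (fun t _ => by linarith [step t])
  have hsumval : ∑ t ∈ Finset.range T, (-(η * M t) + η ^ 2 / 8)
      = -(η * ∑ t ∈ Finset.range T, M t) + T * (η ^ 2 / 8) := by
    rw [Finset.sum_add_distrib, Finset.sum_const, Finset.card_range, nsmul_eq_mul]
    congr 1
    rw [Finset.mul_sum, ← Finset.sum_neg_distrib]
  have hW0 : W 0 = N := by
    have : ∀ j : Fin N, w 0 j = 1 := by intro j; rw [hw]; simp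
    simp only [hWdef, this, Finset.sum_const, Finset.card_univ, Fintype.card_fin, nsmul_eq_mul,
      mul_one]
  -- lower bound via best expert
  obtain ⟨i0, -, hi0⟩ := Finset.exists_mem_eq_inf'
    (Finset.univ_nonempty_iff.mpr (Fin.pos_iff_nonempty.mp hN))
    (fun i => ∑ t ∈ Finset.range T, f t i)
  have hlow : -(η * ∑ t ∈ Finset.range T, f t i0) ≤ Real.log (W T) := by
    have h1 : w T i0 ≤ W T :=
      Finset.single_le_sum (f := fun j => w T j) (fun j _ => by
          have : (0:ℝ) ≤ w T j := by rw [hw]; positivity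
          simpa using this)
        (Finset.mem_univ i0)
    have h2 := Real.log_le_log (by rw [hw]; positivity) h1
    rw [hw, Real.log_exp] at h2
    linarith [h2]
  -- algebra
  set L := Real.log N with hLdef
  have hL : 0 < L := Real.log_pos (by exact_mod_cast hN2)
  have hTpos : (0:ℝ) < T := by exact_mod_cast hT
  have hηpos : 0 < η := by rw [hη]; positivity
  have hη2 : η ^ 2 = 8 * L / T := by rw [hη]; exact Real.sq_sqrt (by positivity)
  have hTη : (T:ℝ) * (η ^ 2 / 8) = L := by rw [hη2]; field_simp
  have hmain : η * ((∑ t ∈ Finset.range T, M t) - ∑ t ∈ Finset.range T, f t i0) ≤ 2 * L := by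
     have hlogW0 : Real.log (W 0) = L := by rw [hW0]
     nlinarith [htel, hsumval, hlow, hTη, hlogW0]
  rw [hi0]
  have hfin : (∑ t ∈ Finset.range T, M t) - ∑ t ∈ Finset.range T, f t i0 ≤ 2 * L / η :=
    (le_div_iff₀ hηpos).mpr (by linarith [hmain])
  have hkey : ((T:ℝ) / 2) * L = (2 * L / η) ^ 2 := by
    rw [div_pow, hη2]; field_simp; ring
  rw [hkey, Real.sqrt_sq (by positivity)]
  exact hfin
end
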